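/- Assume θ < max_{v∈V} c_v. Then the Lagrangian dual J attains its minimum over λ ∈ [0, ∞); moreover, letting λ* be the least minimizer (λ* = min{λ ≥ 0 : J(λ) ≤ J(μ) for all μ ≥ 0}), there exists a nonempty subset S* ⊆ V that maximizes H_{λ*} over all nonempty subsets and satisfies c(S*) ≥ θ. -/
import Mathlib


/-- The number of edges of `G` with both endpoints in `S`, divided by `|S|`. -/
noncomputable def density {V : Type*} (G : SimpleGraph V) (S : Finset V) : ℝ :=
  ({e ∈ G.edgeSet | ∀ v ∈ e, v ∈ S} : Set (Sym2 V)).ncard / S.card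

/-- The average agreement value over `S`. -/
noncomputable def agreement {V : Type*} (c : V → ℝ) (S : Finset V) : ℝ :=
  (∑ v ∈ S, c v) / S.card

/-- The Lagrangian objective `H_λ(S) = d(S) + λ (c(S) - θ)`. -/
noncomputable def Hval {V : Type*} (G : SimpleGraph V) (c : V → ℝ) (θ l : ℝ)
    (S : Finset V) : ℝ :=
  density G S + l * (agreement c S - θ)

lemma density_nonneg {V : Type*} (G : SimpleGraph V) (S : Finset V) :
    0 ≤ density G S := by
  unfold density
  positivity

lemma Hval_shift {V : Type*} (G : SimpleGraph V) (c : V → ℝ) (θ l ε : ℝ) (S : Finset V) :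
    Hval G c θ (l + ε) S = Hval G c θ l S + ε * (agreement c S - θ) := by
  unfold Hval; ring

/-- If `θ < max_v c_v`, the Lagrangian dual `J` attains its minimum over `[0, ∞)`, and at the
least minimizer `λ*` there exists a nonempty maximizer of `H_{λ*}` that is feasible for
Q-DISCO. -/
theorem dual_minimum_attained_and_feasible_optimum {V : Type*} [Fintype V] [Nonempty V]
    (G : SimpleGraph V) (c : V → ℝ) (θ : ℝ)
    (hθ : ∃ v : V, θ < c v) (J : ℝ → ℝ)
    (hJ : ∀ l : ℝ,
      IsGreatest {x : ℝ | ∃ S : Finset V, S.Nonempty ∧ x = Hval G c θ l S} (J l)) :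
    (∃ l : ℝ, 0 ≤ l ∧ ∀ μ : ℝ, 0 ≤ μ → J l ≤ J μ) ∧
    (∀ lstar : ℝ,
      IsLeast {l : ℝ | 0 ≤ l ∧ ∀ μ : ℝ, 0 ≤ μ → J l ≤ J μ} lstar →
      ∃ S : Finset V, S.Nonempty ∧
        (∀ T : Finset V, T.Nonempty → Hval G c θ lstar T ≤ Hval G c θ lstar S) ∧
        θ ≤ agreement c S) := by
  classical
  obtain ⟨v0, hv0⟩ := hθ
  -- the finite set of nonempty subsets
  set 𝒮 : Finset (Finset V) := Finset.univ.filter (fun S => S.Nonempty) with h𝒮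
  have h𝒮mem : ∀ S : Finset V, S ∈ 𝒮 ↔ S.Nonempty := by
    intro S; simp [h𝒮]
  have h𝒮ne : 𝒮.Nonempty := ⟨{v0}, (h𝒮mem _).2 (Finset.singleton_nonempty v0)⟩
  -- J agrees with the finite sup
  have hJeq : ∀ l : ℝ, J l = 𝒮.sup' h𝒮ne (fun S => Hval G c θ l S) := by
    intro l
    apply le_antisymm
    · obtain ⟨S, hSne, hSeq⟩ := (hJ l).1
      rw [hSeq]
      exact Finset.le_sup' _ ((h𝒮mem S).2 hSne)
    · apply Finset.sup'_le
      intro S hS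
      exact (hJ l).2 ⟨S, (h𝒮mem S).1 hS, rfl⟩
  have hJub : ∀ l (S : Finset V), S.Nonempty → Hval G c θ l S ≤ J l := by
    intro l S hS; exact (hJ l).2 ⟨S, hS, rfl⟩
  -- growth: J l ≥ l * (c v0 - θ)
  have hsingle : ∀ l : ℝ, l * (c v0 - θ) ≤ J l := by
    intro l
    have h1 : agreement c ({v0} : Finset V) = c v0 := by
      simp [agreement]
    have h2 : Hval G c θ l {v0} = density G {v0} + l * (c v0 - θ) := by
      rw [Hval, h1]
    have := hJub l {v0} (Finset.singleton_nonempty v0)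
    rw [h2] at this
    nlinarith [density_nonneg G ({v0} : Finset V)]
  have hδ : 0 < c v0 - θ := by linarith
  -- continuity of J
  have hcont : Continuous fun l => J l := by
    have : Continuous fun l => 𝒮.sup' h𝒮ne (fun S => Hval G c θ l S) := by
      apply Continuous.finset_sup'_apply h𝒮ne
      intro S _
      unfold Hval
      continuity
    simp_rw [hJeq]
    exact this
  -- minimize over a compact interval
  set B : ℝ := max ((J 0) / (c v0 - θ)) 0 with hB
  have hB0 : (0 : ℝ) ≤ B := le_max_right _ _
  obtain ⟨l0, hl0mem, hl0min⟩ :=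
    (isCompact_Icc (a := (0:ℝ)) (b := B)).exists_isMinOn ⟨0, by constructor <;> simp [hB0]⟩
      hcont.continuousOn
  have part1 : ∃ l : ℝ, 0 ≤ l ∧ ∀ μ : ℝ, 0 ≤ μ → J l ≤ J μ := by
    refine ⟨l0, hl0mem.1, fun μ hμ => ?_⟩
    by_cases hμB : μ ≤ B
    · exact hl0min ⟨hμ, hμB⟩
    · push_neg at hμB
      have h1 : J 0 ≤ μ * (c v0 - θ) := by
        have : (J 0) / (c v0 - θ) ≤ B := le_max_left _ _
        have : (J 0) / (c v0 - θ) < μ := lt_of_le_of_lt this hμB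
        calc J 0 = (J 0) / (c v0 - θ) * (c v0 - θ) := by field_simp
          _ ≤ μ * (c v0 - θ) := by nlinarith
      have h2 : J l0 ≤ J 0 := hl0min ⟨le_refl 0, hB0⟩
      have h3 := hsingle μ
      linarith
  refine ⟨part1, ?_⟩
  intro lstar hlstar
  obtain ⟨⟨hlstar0, hlstarmin⟩, -⟩ := hlstar
  -- the set of maximizers at lstar
  set A : Finset (Finset V) := 𝒮.filter (fun T => Hval G c θ lstar T = J lstar) with hA
  have hAne : A.Nonempty := by
    obtain ⟨S, hSne, hSeq⟩ := (hJ lstar).1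
    exact ⟨S, Finset.mem_filter.2 ⟨(h𝒮mem S).2 hSne, hSeq.symm⟩⟩
  obtain ⟨S, hSA, hSmax⟩ := A.exists_max_image (fun T => agreement c T) hAne
  have hSA' := Finset.mem_filter.1 hSA
  have hSne : S.Nonempty := (h𝒮mem S).1 hSA'.1
  have hSval : Hval G c θ lstar S = J lstar := hSA'.2
  refine ⟨S, hSne, fun T hT => by rw [hSval]; exact hJub lstar T hT, ?_⟩
  -- suppose agreement c S < θ, derive a contradiction
  by_contra hcon
  push_neg at hcon
  -- choose ε > 0 small enough
  set f : Finset V → ℝ := fun T =>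
    if agreement c T - θ ≤ 0 then 1 else (J lstar - Hval G c θ lstar T) / (agreement c T - θ)
    with hf
  have hfpos : ∀ T ∈ 𝒮, 0 < f T := by
    intro T hT
    simp only [hf]
    split_ifs with h
    · norm_num
    · push_neg at h
      apply div_pos _ h
      have hle := hJub lstar T ((h𝒮mem T).1 hT)
      rcases lt_or_eq_of_le hle with h' | h'
      · linarith
      · exfalso
        -- T is a maximizer with agreement > θ, contradicting agreement S < θ
        have hTA : T ∈ A := Finset.mem_filter.2 ⟨hT, h'⟩
        have := hSmax T hTA
        linarith
  set ε : ℝ := (𝒮.inf' h𝒮ne f) / 2 with hε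
  have hinfpos : 0 < 𝒮.inf' h𝒮ne f := by
    obtain ⟨T0, hT0, hT0eq⟩ := Finset.exists_mem_eq_inf' h𝒮ne f
    rw [hT0eq]; exact hfpos T0 hT0
  have hεpos : 0 < ε := by positivity
  have hεlt : ∀ T ∈ 𝒮, ε < f T := by
    intro T hT
    have h1 : 𝒮.inf' h𝒮ne f ≤ f T := Finset.inf'_le f hT
    have : ε < 𝒮.inf' h𝒮ne f := by rw [hε]; linarith
    linarith
  -- J (lstar + ε) < J lstar
  have hkey : J (lstar + ε) < J lstar := by
    obtain ⟨T, hTne, hTeq⟩ := (hJ (lstar + ε)).1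
    rw [hTeq, Hval_shift]
    have hT𝒮 : T ∈ 𝒮 := (h𝒮mem T).2 hTne
    have hle := hJub lstar T hTne
    rcases lt_or_eq_of_le hle with h' | h'
    · -- T not a maximizer at lstar
      by_cases hs : agreement c T - θ ≤ 0
      · nlinarith
      · push_neg at hs
        have h2 := hεlt T hT𝒮
        simp only [hf] at h2
        simp only [if_neg (not_le.2 hs)] at h2
        have h3 := (lt_div_iff₀ hs).mp h2
        linarith
    · -- T is a maximizer: its agreement is < θ
      have hTA : T ∈ A := Finset.mem_filter.2 ⟨hT𝒮, h'⟩
      have h2 := hSmax T hTA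
      have hsneg : agreement c T - θ < 0 := by linarith
      nlinarith
  have := hlstarmin (lstar + ε) (by linarith)
  linarith
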